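/- Let 1 ≤ k and 3k ≤ n, and let S ⊆ {1,…,n} with |S| = k. With D_S the planted biclique distribution, let ψ_S ∈ ℂ^{F₂ⁿ} be its coherent encoding, ψ_S(x) = √(D_S(x)), and let u ∈ ℂ^{F₂ⁿ} be the uniform superposition u(x) = 2^{−n/2}. Then the overlap satisfies √(1 − k/n) ≤ ⟨u, ψ_S⟩ ≤ (1 + 2^{−(k+1)/2})·√(1 − k/n). -/

import Mathlib

/-- The planted bipartite `k`-clique distribution `D_S` on `F₂ⁿ`. -/
noncomputable def bicliqueD (n k : ℕ) (S : Finset (Fin n)) (x : Fin n → ZMod 2) : ℝ :=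
  if ∀ i ∈ S, x i = 1 then
    ((k : ℝ) / n) / 2 ^ (n - k) + (1 - (k : ℝ) / n) / 2 ^ n
  else (1 - (k : ℝ) / n) / 2 ^ n

lemma card_fixed_ones (n : ℕ) (S : Finset (Fin n)) :
    (Finset.univ.filter (fun x : Fin n → ZMod 2 => ∀ i ∈ S, x i = 1)).card
      = 2 ^ (n - S.card) := by
  classical
  have htarget : (Finset.univ : Finset ({i // i ∈ Sᶜ} → ZMod 2)).card = 2 ^ (n - S.card) := by
    rw [Finset.card_univ, Fintype.card_fun]
    simp [Finset.card_compl]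
  rw [← htarget]
  refine Finset.card_bij' (fun x _ => fun j : {i // i ∈ Sᶜ} => x j.1)
    (fun y _ => fun i => if h : i ∈ S then 1 else y ⟨i, Finset.mem_compl.mpr h⟩)
    (fun x hx => Finset.mem_univ _) ?_ ?_ ?_
  · intro y _
    simp only [Finset.mem_filter, Finset.mem_univ, true_and]
    intro i hi
    simp [hi]
  · intro x hx
    funext i
    by_cases h : i ∈ S
    · simp only [Finset.mem_filter, Finset.mem_univ, true_and] at hx
      simp [h, hx i h]
    · simp [h]
  · intro y _
    funext j
    have hj : j.1 ∉ S := Finset.mem_compl.mp j.2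
    simp [hj]

/-- Overlap bounds between the coherent encoding `ψ_S` of the planted biclique distribution
and the uniform superposition `u`: `√(1 - k/n) ≤ ⟨u, ψ_S⟩ ≤ (1 + 2^{-(k+1)/2})·√(1 - k/n)`. -/
theorem biclique_overlap_bounds (n k : ℕ) (hk : 1 ≤ k) (hkn : 3 * k ≤ n)
    (S : Finset (Fin n)) (hS : S.card = k) :
    Real.sqrt (1 - (k : ℝ) / n)
        ≤ ∑ x : Fin n → ZMod 2, (Real.sqrt (2 ^ n))⁻¹ * Real.sqrt (bicliqueD n k S x) ∧
    ∑ x : Fin n → ZMod 2, (Real.sqrt (2 ^ n))⁻¹ * Real.sqrt (bicliqueD n k S x)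
        ≤ (1 + (Real.sqrt (2 ^ (k + 1)))⁻¹) * Real.sqrt (1 - (k : ℝ) / n) := by
  classical
  have hkle : k ≤ n := by omega
  have hn0 : 0 < n := by omega
  have hnR : (0:ℝ) < n := by exact_mod_cast hn0
  set r : ℝ := (k : ℝ) / n with hr
  have hr0 : 0 ≤ r := by positivity
  have hr3 : 3 * r ≤ 1 := by
    have h3 : (3:ℝ) * k ≤ n := by exact_mod_cast hkn
    rw [hr, show (3:ℝ) * ((k:ℝ)/n) = (3*(k:ℝ))/n from by ring, div_le_one hnR]
    linarith
  have hB0 : (0:ℝ) ≤ 1 - r := by linarith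
  set A : ℝ := 1 - r + r * 2 ^ k with hA
  have hA0 : (0:ℝ) ≤ A := by positivity
  have h2n : (0:ℝ) < 2 ^ n := by positivity
  have h2k : (0:ℝ) < 2 ^ k := by positivity
  have hpow : (2:ℝ) ^ (n - k) * 2 ^ k = 2 ^ n := by
    rw [← pow_add, Nat.sub_add_cancel hkle]
  have hsqrt2n : Real.sqrt (2 ^ n) * Real.sqrt (2 ^ n) = 2 ^ n :=
    Real.mul_self_sqrt (le_of_lt h2n)
  have hs0 : Real.sqrt ((2:ℝ) ^ n) ≠ 0 := by positivity
  have hval1 : r / 2 ^ (n - k) + (1 - r) / 2 ^ n = A / 2 ^ n := by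
    rw [hA, ← hpow]
    have h1 : ((2:ℝ)) ^ (n - k) ≠ 0 := by positivity
    have h2 : ((2:ℝ)) ^ k ≠ 0 := by positivity
    field_simp
    ring
  -- compute the sum
  have hsum : ∑ x : Fin n → ZMod 2, (Real.sqrt (2 ^ n))⁻¹ * Real.sqrt (bicliqueD n k S x)
      = Real.sqrt A / 2 ^ k + (1 - ((2:ℝ) ^ k)⁻¹) * Real.sqrt (1 - r) := by
    have hcongr : ∀ x : Fin n → ZMod 2,
        (Real.sqrt (2 ^ n))⁻¹ * Real.sqrt (bicliqueD n k S x)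
          = if ∀ i ∈ S, x i = 1 then (Real.sqrt (2 ^ n))⁻¹ * Real.sqrt (A / 2 ^ n)
            else (Real.sqrt (2 ^ n))⁻¹ * Real.sqrt ((1 - r) / 2 ^ n) := by
      intro x
      unfold bicliqueD
      rw [← hr, hval1]
      split <;> rfl
    rw [Finset.sum_congr rfl (fun x _ => hcongr x), Finset.sum_ite, Finset.sum_const,
      Finset.sum_const, card_fixed_ones, hS]
    have hcard2 : (Finset.univ.filter (fun x : Fin n → ZMod 2 => ¬ ∀ i ∈ S, x i = 1)).card
        = 2 ^ n - 2 ^ (n - k) := by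
      have h : (Finset.univ.filter (fun x : Fin n → ZMod 2 => ∀ i ∈ S, x i = 1)).card
          + (Finset.univ.filter (fun x : Fin n → ZMod 2 => ¬ ∀ i ∈ S, x i = 1)).card
          = (Finset.univ : Finset (Fin n → ZMod 2)).card :=
        Finset.card_filter_add_card_filter_not _
      rw [card_fixed_ones, hS, Finset.card_univ, Fintype.card_fun, ZMod.card,
        Fintype.card_fin] at h
      exact Nat.eq_sub_of_add_eq' h
    rw [hcard2]
    have hle : (2:ℕ) ^ (n - k) ≤ 2 ^ n := Nat.pow_le_pow_right (by norm_num) (Nat.sub_le _ _)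
    have hcast : ((2 ^ n - 2 ^ (n - k) : ℕ) : ℝ) = 2 ^ n - 2 ^ (n - k) := by
      push_cast [Nat.cast_sub hle]; ring
    rw [nsmul_eq_mul, nsmul_eq_mul, hcast]
    push_cast
    rw [Real.sqrt_div hA0, Real.sqrt_div hB0]
    have hsimp : ∀ x : ℝ, (Real.sqrt (2 ^ n))⁻¹ * (x / Real.sqrt (2 ^ n)) = x / 2 ^ n := by
      intro x
      rw [← hsqrt2n]
      field_simp
      rw [Real.sqrt_sq (Real.sqrt_nonneg _)]
    rw [hsimp, hsimp]
    have h1 : ((2:ℝ)) ^ (n - k) = 2 ^ n / 2 ^ k := by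
      rw [← hpow]; field_simp
    rw [h1]
    field_simp
  rw [hsum]
  have hsB : Real.sqrt (1 - r) ≤ Real.sqrt A := Real.sqrt_le_sqrt (by nlinarith)
  constructor
  · calc Real.sqrt (1 - r)
        = Real.sqrt (1 - r) / 2 ^ k + (1 - ((2:ℝ) ^ k)⁻¹) * Real.sqrt (1 - r) := by
          field_simp; ring
      _ ≤ Real.sqrt A / 2 ^ k + (1 - ((2:ℝ) ^ k)⁻¹) * Real.sqrt (1 - r) := by
          gcongr
  · -- upper bound
    have hrk0 : (0:ℝ) ≤ r * 2 ^ k := by positivity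
    have hsplit : Real.sqrt A ≤ Real.sqrt (1 - r) + Real.sqrt (r * 2 ^ k) := by
      have h := Real.sqrt_le_sqrt (show A ≤ (Real.sqrt (1 - r) + Real.sqrt (r * 2 ^ k)) ^ 2 by
        nlinarith [Real.sq_sqrt hB0, Real.sq_sqrt hrk0, Real.sqrt_nonneg (1 - r),
          Real.sqrt_nonneg (r * 2 ^ k)])
      rwa [Real.sqrt_sq (by positivity)] at h
    have key : Real.sqrt (r * 2 ^ k) / 2 ^ k
        ≤ (Real.sqrt (2 ^ (k + 1)))⁻¹ * Real.sqrt (1 - r) := by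
      have hskpos : (0:ℝ) < Real.sqrt (2 ^ k) := Real.sqrt_pos.mpr h2k
      have hsk : Real.sqrt ((2:ℝ) ^ k) * Real.sqrt ((2:ℝ) ^ k) = 2 ^ k :=
        Real.mul_self_sqrt h2k.le
      have hs2k1 : Real.sqrt ((2:ℝ) ^ (k + 1)) = Real.sqrt (2 ^ k) * Real.sqrt 2 := by
        rw [pow_succ, Real.sqrt_mul (by positivity)]
      have h2r : Real.sqrt (r * 2) ≤ Real.sqrt (1 - r) := Real.sqrt_le_sqrt (by linarith)
      have hfin : Real.sqrt r * Real.sqrt 2 * 2 ^ k ≤ Real.sqrt (1 - r) * 2 ^ k := by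
        apply mul_le_mul_of_nonneg_right _ h2k.le
        rw [← Real.sqrt_mul hr0]
        exact h2r
      rw [Real.sqrt_mul hr0, hs2k1, inv_mul_eq_div, div_le_div_iff₀ h2k (by positivity)]
      calc Real.sqrt r * Real.sqrt (2 ^ k) * (Real.sqrt (2 ^ k) * Real.sqrt 2)
          = Real.sqrt r * Real.sqrt 2 * (Real.sqrt (2 ^ k) * Real.sqrt (2 ^ k)) := by ring
        _ = Real.sqrt r * Real.sqrt 2 * 2 ^ k := by rw [hsk]
        _ ≤ Real.sqrt (1 - r) * 2 ^ k := hfin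
    have hdiv : Real.sqrt A / 2 ^ k
        ≤ (Real.sqrt (1 - r) + Real.sqrt (r * 2 ^ k)) / 2 ^ k := by gcongr
    calc Real.sqrt A / 2 ^ k + (1 - ((2:ℝ) ^ k)⁻¹) * Real.sqrt (1 - r)
        ≤ (Real.sqrt (1 - r) + Real.sqrt (r * 2 ^ k)) / 2 ^ k
            + (1 - ((2:ℝ) ^ k)⁻¹) * Real.sqrt (1 - r) := by linarith
      _ = Real.sqrt (1 - r) + Real.sqrt (r * 2 ^ k) / 2 ^ k := by field_simp; ring
      _ ≤ Real.sqrt (1 - r) + (Real.sqrt (2 ^ (k + 1)))⁻¹ * Real.sqrt (1 - r) := by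
          linarith
      _ = (1 + (Real.sqrt (2 ^ (k + 1)))⁻¹) * Real.sqrt (1 - r) := by ring
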